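/- Let X be a real normed linear space, A, B ⊆ X, a ∈ A, b ∈ B. The pair {A,B} is extremal relative to a and b if and only if 0 belongs to the boundary of the set (A − a) − (B − b) = {x − y : x ∈ A − a, y ∈ B − b}; equivalently, if and only if a − b belongs to the boundary of the set A − B := {x − y : x ∈ A, y ∈ B}. -/

import Mathlib

open Metric

variable {X : Type*} [NormedAddCommGroup X] [NormedSpace ℝ X]

/-- The pair {A,B} is extremal relative to the points `a ∈ A` and `b ∈ B`. -/
def ExtremalRel (A B : Set X) (a b : X) : Prop :=
  ∀ ε > (0 : ℝ), ∃ u v : X,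
    ((fun x => x - a - u) '' A) ∩ ((fun x => x - b - v) '' B) = ∅ ∧
    max ‖u‖ ‖v‖ < ε

/-- The pair {A,B} is locally extremal relative to the points `a ∈ A` and `b ∈ B`. -/
def LocallyExtremalRel (A B : Set X) (a b : X) : Prop :=
  ∃ ρ > (0 : ℝ), ∀ ε > (0 : ℝ), ∃ u v : X,
    ((fun x => x - a - u) '' A) ∩ ((fun x => x - b - v) '' B) ∩
      closedBall (0 : X) ρ = ∅ ∧
    max ‖u‖ ‖v‖ < ε

/-- The pair {A,B} is stationary relative to the points `a ∈ A` and `b ∈ B`. -/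
def StationaryRel (A B : Set X) (a b : X) : Prop :=
  ∀ ε > (0 : ℝ), ∃ ρ : ℝ, 0 < ρ ∧ ρ < ε ∧ ∃ u v : X,
    ((fun x => x - a - u) '' A) ∩ ((fun x => x - b - v) '' B) ∩
      closedBall (0 : X) ρ = ∅ ∧
    max ‖u‖ ‖v‖ < ε * ρ

/-- The pair {A,B} is approximately stationary relative to `a ∈ A` and `b ∈ B`. -/
def ApproxStationaryRel (A B : Set X) (a b : X) : Prop :=
  ∀ ε > (0 : ℝ), ∃ ρ : ℝ, 0 < ρ ∧ ρ < ε ∧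
    ∃ a' ∈ A ∩ ball a ε, ∃ b' ∈ B ∩ ball b ε, ∃ u v : X,
      ((fun x => x - a' - u) '' A) ∩ ((fun x => x - b' - v) '' B) ∩
        closedBall (0 : X) ρ = ∅ ∧
      max ‖u‖ ‖v‖ < ε * ρ


open Pointwise

lemma inter_empty_iff' (A B : Set X) (a b u v : X) :
    ((fun x => x - a - u) '' A) ∩ ((fun x => x - b - v) '' B) = ∅ ↔
    u - v ∉ ((fun x => x - a) '' A) - ((fun x => x - b) '' B) := by
  rw [Set.eq_empty_iff_forall_notMem]
  constructor
  · rintro h hmem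
    rw [Set.mem_sub] at hmem
    obtain ⟨p, ⟨x, hx, rfl⟩, q, ⟨y, hy, rfl⟩, heq⟩ := hmem
    exact h (x - a - u) ⟨⟨x, hx, rfl⟩, ⟨y, hy, by simp only; linear_combination (norm := module) -heq⟩⟩
  · rintro h z ⟨⟨x, hx, rfl⟩, ⟨y, hy, hyz⟩⟩
    exact h (Set.mem_sub.2 ⟨x - a, ⟨x, hx, rfl⟩, y - b, ⟨y, hy, rfl⟩,
      by linear_combination (norm := module) -hyz⟩)

lemma sub_image_eq' (A B : Set X) (a b : X) :
    ((fun x => x - a) '' A) - ((fun x => x - b) '' B)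
      = (fun z => z - (a - b)) '' (A - B) := by
  ext z
  simp only [Set.mem_sub, Set.mem_image]
  constructor
  · rintro ⟨p, ⟨x, hx, rfl⟩, q, ⟨y, hy, rfl⟩, heq⟩
    exact ⟨x - y, ⟨x, hx, y, hy, rfl⟩, by linear_combination (norm := abel) heq⟩
  · rintro ⟨w, ⟨x, hx, y, hy, rfl⟩, rfl⟩
    exact ⟨x - a, ⟨x, hx, rfl⟩, y - b, ⟨y, hy, rfl⟩, by abel⟩

lemma extremal_iff_closure (A B : Set X) (a b : X) :
    ExtremalRel A B a b ↔
      (0 : X) ∈ closure (((fun x => x - a) '' A) - ((fun x => x - b) '' B))ᶜ := by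
  rw [Metric.mem_closure_iff]
  constructor
  · intro hext ε hε
    obtain ⟨u, v, hemp, hlt⟩ := hext (ε / 2) (by linarith)
    refine ⟨u - v, (inter_empty_iff' A B a b u v).1 hemp, ?_⟩
    rw [dist_zero_left]
    calc ‖u - v‖ ≤ ‖u‖ + ‖v‖ := norm_sub_le u v
    _ < ε := by
        have h1 : ‖u‖ < ε / 2 := lt_of_le_of_lt (le_max_left _ _) hlt
        have h2 : ‖v‖ < ε / 2 := lt_of_le_of_lt (le_max_right _ _) hlt
        linarith
  · intro h ε hε
    obtain ⟨w, hw, hd⟩ := h ε hε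
    refine ⟨w, 0, (inter_empty_iff' A B a b w 0).2 (by simpa using hw), ?_⟩
    rw [dist_zero_left] at hd
    simp [hd, hε]

open Pointwise in
/-- Relative extremality is equivalent to `0 ∈ bd((A − a) − (B − b))`, equivalently to
`a − b ∈ bd(A − B)` (Minkowski differences of sets). -/
theorem stmt_19 (A B : Set X) (a : X) (ha : a ∈ A) (b : X) (hb : b ∈ B) :
    (ExtremalRel A B a b ↔
      (0 : X) ∈ frontier (((fun x => x - a) '' A) - ((fun x => x - b) '' B))) ∧
    (ExtremalRel A B a b ↔ a - b ∈ frontier (A - B)) := by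

  have h0 : (0 : X) ∈ ((fun x => x - a) '' A) - ((fun x => x - b) '' B) :=
    Set.mem_sub.2 ⟨a - a, ⟨a, ha, rfl⟩, b - b, ⟨b, hb, rfl⟩, by abel⟩
  have hfr : ((0 : X) ∈ frontier (((fun x => x - a) '' A) - ((fun x => x - b) '' B))) ↔
      (0 : X) ∈ closure (((fun x => x - a) '' A) - ((fun x => x - b) '' B))ᶜ := by
    rw [frontier_eq_closure_inter_closure]
    exact ⟨fun h => h.2, fun h => ⟨subset_closure h0, h⟩⟩
  have hmain : ExtremalRel A B a b ↔
      (0 : X) ∈ frontier (((fun x => x - a) '' A) - ((fun x => x - b) '' B)) :=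
    (extremal_iff_closure A B a b).trans hfr.symm
  refine ⟨hmain, hmain.trans ?_⟩
  rw [sub_image_eq']
  constructor
  · intro h
    have : (0 : X) ∈ frontier ((Homeomorph.subRight (a - b)) '' (A - B)) := h
    rw [← Homeomorph.preimage_symm, ← Homeomorph.preimage_frontier] at this
    simpa using this
  · intro h
    show (0 : X) ∈ frontier ((Homeomorph.subRight (a - b)) '' (A - B))
    rw [← Homeomorph.preimage_symm, ← Homeomorph.preimage_frontier]
    simpa using h
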